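/- arXiv:2103.05726 — 2 statements merged into one kernel-verified Lean document; each statement's English description precedes it below -/
import Mathlib

section
/- For all real numbers a > 0 and b, c ≥ 0, the 4×4 real matrix M(a,b,c) with rows (2a(a+b), 2a², c(a+b), ac), (2ab, 4a², bc, 2ac), (a(a+b), a², (a+c)(a+b), a(a+c)), (ab, 2a², b(a+c), 2a(a+c)) is invertible; consequently, if the four face Bézier coefficients obtained by applying M(a,b,c)/((2a+b)(2a+c)) to a vector of four spline coefficients all vanish, then the four spline coefficients themselves vanish. -/
/-- The matrix of Eq. (33) of the paper (unnormalized), expressing the four face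
Bézier coefficients of an irregular face in terms of four spline coefficients. -/
noncomputable def M (a b c : ℝ) : Matrix (Fin 4) (Fin 4) ℝ :=
  !![2*a*(a+b), 2*a^2, c*(a+b),     a*c;
     2*a*b,     4*a^2, b*c,         2*a*c;
     a*(a+b),   a^2,   (a+c)*(a+b), a*(a+c);
     a*b,       2*a^2, b*(a+c),     2*a*(a+c)]

/-- For `a > 0` and `b, c ≥ 0`, the matrix `M(a,b,c)` is invertible; consequently,
if the four face Bézier coefficients obtained by applying
`M(a,b,c)/((2a+b)(2a+c))` to a vector of four spline coefficients all vanish,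
then the four spline coefficients themselves vanish. -/
theorem M_invertible (a b c : ℝ) (ha : 0 < a) (hb : 0 ≤ b) (hc : 0 ≤ c) :
    IsUnit (M a b c) ∧
    ∀ v : Fin 4 → ℝ,
      (((2*a + b) * (2*a + c))⁻¹ • M a b c).mulVec v = 0 → v = 0 := by
  have hdet : (M a b c).det = a^4 * (2*a+b)^2 * (2*a+c)^2 := by
    simp [M, Matrix.det_succ_row_zero, Fin.sum_univ_succ, Fin.succAbove, Fin.castSucc, Fin.castAdd, Fin.castLE]; ring
  have hb' : (0:ℝ) < 2*a + b := by linarith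
  have hc' : (0:ℝ) < 2*a + c := by linarith
  have hdne : (M a b c).det ≠ 0 := by
    rw [hdet]; positivity
  have hU : IsUnit (M a b c) :=
    (Matrix.isUnit_iff_isUnit_det _).2 (isUnit_iff_ne_zero.2 hdne)
  refine ⟨hU, fun v hv => ?_⟩
  rw [Matrix.smul_mulVec, smul_eq_zero] at hv
  have hk : ((2*a + b) * (2*a + c))⁻¹ ≠ 0 := by positivity
  have h0 : (M a b c).mulVec v = 0 := hv.resolve_left hk
  have hinj := Matrix.mulVec_injective_iff_isUnit.2 hU
  have : (M a b c).mulVec v = (M a b c).mulVec 0 := by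
    simpa using h0
  exact hinj this
end

section
/- For all real numbers a, b, c ≥ 0 with 2a + b > 0 and 2a + c > 0, every row of the 4×4 real matrix M(a,b,c) with rows (2a(a+b), 2a², c(a+b), ac), (2ab, 4a², bc, 2ac), (a(a+b), a², (a+c)(a+b), a(a+c)), (ab, 2a², b(a+c), 2a(a+c)) sums to (2a+b)(2a+c), and every entry of M(a,b,c) is nonnegative; hence the normalized matrix M(a,b,c)/((2a+b)(2a+c)) is row-stochastic, so each face Bézier control point of an irregular face is a convex combination of the four spline control points at its corners. -/
/-- For `a, b, c ≥ 0` with `2a + b > 0` and `2a + c > 0`, every row of `M(a,b,c)`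
sums to `(2a+b)(2a+c)` and every entry of `M(a,b,c)` is nonnegative; hence the
normalized matrix `M(a,b,c)/((2a+b)(2a+c))` is row-stochastic, so each face Bézier
control point is a convex combination of the four spline control points. -/
theorem M_row_stochastic (a b c : ℝ) (ha : 0 ≤ a) (hb : 0 ≤ b) (hc : 0 ≤ c)
    (hab : 0 < 2*a + b) (hac : 0 < 2*a + c) :
    (∀ i : Fin 4, ∑ j : Fin 4, M a b c i j = (2*a + b) * (2*a + c)) ∧
    (∀ i j : Fin 4, 0 ≤ M a b c i j) ∧
    (∀ i : Fin 4, ∑ j : Fin 4, (((2*a + b) * (2*a + c))⁻¹ • M a b c) i j = 1) := by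
  have hne : (2*a + b) * (2*a + c) ≠ 0 := ne_of_gt (mul_pos hab hac)
  have hsum : ∀ i : Fin 4, ∑ j : Fin 4, M a b c i j = (2*a + b) * (2*a + c) := by
    intro i
    fin_cases i <;> simp [M, Fin.sum_univ_four] <;> ring
  refine ⟨hsum, ?_, ?_⟩
  · intro i j
    fin_cases i <;> fin_cases j <;> simp [M] <;> positivity
  · intro i
    simp only [Matrix.smul_apply, smul_eq_mul, ← Finset.mul_sum, hsum]
    exact inv_mul_cancel₀ hne
end
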